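/- Let R be any ring, n ≥ 5, and let S be a subring of T_n(R) strictly containing D_n(R). If S contains a non-trivial idempotent, then S is not i-reversible. -/

import Mathlib

/-- A ring is *i-reversible* if whenever `a * b` is a non-zero idempotent, `b * a` is an
idempotent. -/
def IsIReversible (S : Type*) [Ring S] : Prop :=
  ∀ a b : S, IsIdempotentElem (a * b) → a * b ≠ 0 → IsIdempotentElem (b * a)

/-- A ring is *reversible* if `a * b = 0` implies `b * a = 0`. -/
def IsReversible (S : Type*) [Ring S] : Prop :=
  ∀ a b : S, a * b = 0 → b * a = 0

/-- A ring has only trivial idempotents if its only idempotents are `0` and `1`. -/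
def HasOnlyTrivialIdempotents (S : Type*) [Ring S] : Prop :=
  ∀ e : S, IsIdempotentElem e → e = 0 ∨ e = 1

/-- Upper triangular predicate for square matrices. -/
def Matrix.IsUpperTri {n : ℕ} {R : Type*} [Zero R] (A : Matrix (Fin n) (Fin n) R) : Prop :=
  ∀ ⦃i j : Fin n⦄, j < i → A i j = 0

lemma Matrix.IsUpperTri.mul {n : ℕ} {R : Type*} [Ring R]
    {A B : Matrix (Fin n) (Fin n) R} (hA : A.IsUpperTri) (hB : B.IsUpperTri) :
    (A * B).IsUpperTri := by
  intro i j h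
  rw [Matrix.mul_apply]
  refine Finset.sum_eq_zero fun k _ => ?_
  rcases lt_or_ge k i with hk | hk
  · rw [hA hk, zero_mul]
  · rw [hB (lt_of_lt_of_le h hk), mul_zero]

/-- The ring `T_n(R)` of upper triangular `n × n` matrices, as a subring of the matrix ring. -/
def triangularRing (n : ℕ) (R : Type*) [Ring R] :
    Subring (Matrix (Fin n) (Fin n) R) where
  carrier := {A | A.IsUpperTri}
  mul_mem' ha hb := ha.mul hb
  one_mem' := fun i j h => by simp [Matrix.one_apply, (ne_of_lt h).symm]
  add_mem' ha hb := fun i j h => by simp [Matrix.add_apply, ha h, hb h]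
  zero_mem' := fun i j h => rfl
  neg_mem' ha := fun i j h => by simp [ha h]

lemma diag_mul_upperTri {n : ℕ} {R : Type*} [Ring R]
    {A B : Matrix (Fin n) (Fin n) R} (hA : A.IsUpperTri)
    (hB : B.IsUpperTri) (i : Fin n) : (A * B) i i = A i i * B i i := by
  rw [Matrix.mul_apply]
  refine Finset.sum_eq_single i (fun k _ hk => ?_) (by simp)
  rcases lt_or_gt_of_ne hk with h | h
  · rw [hA h, zero_mul]
  · rw [hB h, mul_zero]

/-- The ring `D_n(R)` of upper triangular `n × n` matrices with constant diagonal. -/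
def constDiagRing (n : ℕ) (R : Type*) [Ring R] :
    Subring (Matrix (Fin n) (Fin n) R) where
  carrier := {A | A.IsUpperTri ∧ ∀ i j : Fin n, A i i = A j j}
  mul_mem' := by
    rintro A B ⟨hA, hA'⟩ ⟨hB, hB'⟩
    refine ⟨hA.mul hB, fun i j => ?_⟩
    rw [diag_mul_upperTri hA hB, diag_mul_upperTri hA hB, hA' i j, hB' i j]
  one_mem' := ⟨fun i j h => by simp [Matrix.one_apply, (ne_of_lt h).symm], by simp⟩
  add_mem' := by
    rintro A B ⟨hA, hA'⟩ ⟨hB, hB'⟩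
    exact ⟨fun i j h => by simp [Matrix.add_apply, hA h, hB h],
      fun i j => by simp [Matrix.add_apply, hA' i j, hB' i j]⟩
  zero_mem' := ⟨fun i j h => rfl, by simp⟩
  neg_mem' := by
    rintro A ⟨hA, hA'⟩
    exact ⟨fun i j h => by simp [hA h], fun i j => by simp [hA' i j]⟩

section AuxHelpers

variable {n : ℕ} {R : Type*} [Ring R]

lemma mul_sbm_mul (M N : Matrix (Fin n) (Fin n) R) (a b : Fin n) (c : R) (p q : Fin n) :
    (M * Matrix.single a b c * N) p q = M p a * c * N b q := by
  rw [Matrix.mul_apply]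
  refine (Finset.sum_eq_single b (fun m _ hm => by simp [hm]) (by simp)).trans (by simp)

lemma sbm_mem_constDiag {i j : Fin n} (h : i < j) (c : R) :
    Matrix.single i j c ∈ constDiagRing n R := by
  refine ⟨fun p q hqp => ?_, fun p q => ?_⟩
  · apply Matrix.single_apply_of_ne
    rintro ⟨rfl, rfl⟩
    exact absurd h (not_lt.2 hqp.le)
  · rw [Matrix.single_apply_of_ne, Matrix.single_apply_of_ne] <;>
      rintro ⟨rfl, rfl⟩ <;> exact h.ne rfl

lemma triple_zero (S : Subring (Matrix (Fin n) (Fin n) R))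
    (hrev : IsIReversible S) (hD : constDiagRing n R ≤ S)
    (f : Matrix (Fin n) (Fin n) R) (hfS : f ∈ S) (hf : IsIdempotentElem f)
    (hf0 : f ≠ 0) (hfu : f.IsUpperTri)
    {i j k : Fin n} (hij : i < j) (hjk : j < k) (r r' : R) :
    (1 - f) i i * r * (1 - f) j j * r' * (1 - f) k k = 0 := by
  set g : Matrix (Fin n) (Fin n) R := 1 - f with hgdef
  have hgu : ∀ ⦃p q : Fin n⦄, q < p → g p q = 0 := by
    intro p q h
    simp [hgdef, Matrix.sub_apply, Matrix.one_apply_ne h.ne', hfu h]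
  have hfg : f * g = 0 := by rw [hgdef, mul_sub, mul_one, hf.eq, sub_self]
  have hgf : g * f = 0 := by rw [hgdef, sub_mul, one_mul, hf.eq, sub_self]
  have hgg : g * g = g := by
    rw [hgdef]; exact hf.one_sub.eq
  have hgS : g ∈ S := sub_mem (one_mem S) hfS
  set w : Matrix (Fin n) (Fin n) R := Matrix.single i j r with hwdef
  set z : Matrix (Fin n) (Fin n) R := Matrix.single j k r' with hzdef
  have hwS : w ∈ S := hD (sbm_mem_constDiag hij r)
  have hzS : z ∈ S := hD (sbm_mem_constDiag hjk r')
  -- key vanishing: z * g * w = 0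
  have hzgw : z * g * w = 0 := by
    ext p' q'
    rw [hzdef, hwdef, Matrix.zero_apply]
    by_cases hq : q' = j
    · subst hq
      by_cases hp : p' = q'
      · subst hp
        simp [hgu (hij.trans hjk)]
      · simp [hp]
    · simp [hq]
  set A : Matrix (Fin n) (Fin n) R := f + z * g with hAdef
  set B : Matrix (Fin n) (Fin n) R := f + g * w with hBdef
  have hAS : A ∈ S := add_mem hfS (mul_mem hzS hgS)
  have hBS : B ∈ S := add_mem hfS (mul_mem hgS hwS)
  have hABf : A * B = f := by
    have expand : A * B = f * f + f * g * w + (z * (g * f) + z * g * g * w) := by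
      rw [hAdef, hBdef]; noncomm_ring
    rw [expand, hf.eq, hfg, zero_mul, hgf, mul_zero, mul_assoc z g g, hgg, hzgw]
    simp
  -- apply i-reversibility
  set a : S := ⟨A, hAS⟩ with hadef
  set b : S := ⟨B, hBS⟩ with hbdef
  have hab : a * b = (⟨f, hfS⟩ : S) := Subtype.ext (by simpa using hABf)
  have hidem : IsIdempotentElem (a * b) := by
    rw [hab]; exact Subtype.ext (by simpa using hf.eq)
  have hne : a * b ≠ 0 := by
    rw [hab]; intro h
    exact hf0 (by simpa using congrArg Subtype.val h)
  have hba := (hrev a b hidem hne).eq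
  have hmat : B * A * (B * A) = B * A := by
    have := congrArg Subtype.val hba
    simpa using this
  have hBfA : B * f * A = B * A := by
    calc B * f * A = B * A * (B * A) := by rw [← hABf]; noncomm_ring
      _ = B * A := hmat
  have hBgA : B * g * A = 0 := by
    have : B * g * A = B * A - B * f * A := by rw [hgdef]; noncomm_ring
    rw [this, hBfA, sub_self]
  have hgwgzg : g * w * g * z * g = 0 := by
    have expand : B * g * A
        = f * g * f + f * g * (z * g) + g * w * (g * f) + g * w * g * z * g := by
      rw [hAdef, hBdef]; noncomm_ring
    rw [hBgA, hfg, hgf, zero_mul, zero_mul, mul_zero] at expand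
    have := expand.symm
    simpa using this
  have hent : (g * w * g * z * g) i k = 0 := by rw [hgwgzg, Matrix.zero_apply]
  rw [hzdef, mul_sbm_mul (g * w * g) g j k r' i k, hwdef, mul_sbm_mul g g i j r i j] at hent
  exact hent

lemma mid_zero {R : Type*} [Ring R] (x y : ℕ → R)
    (hxy : ∀ m, x m + y m = 1)
    (hx : ∀ i j k : ℕ, i < j → j < k → k ≤ 4 → ∀ r r' : R, x i * r * x j * r' * x k = 0)
    (hy : ∀ i j k : ℕ, i < j → j < k → k ≤ 4 → ∀ r r' : R, y i * r * y j * r' * y k = 0) :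
    x 2 = 0 := by
  have t1 : x 0 * (x 1 * (x 2 * (x 3 * x 4))) = 0 := by
    have h := hx 0 1 2 (by norm_num) (by norm_num) (by norm_num) 1 1
    calc x 0 * (x 1 * (x 2 * (x 3 * x 4))) = x 0 * 1 * x 1 * 1 * x 2 * (x 3 * x 4) := by
          noncomm_ring
      _ = 0 := by rw [h, zero_mul]
  have t2 : x 0 * (x 1 * (x 2 * (x 3 * y 4))) = 0 := by
    have h := hx 0 1 2 (by norm_num) (by norm_num) (by norm_num) 1 1
    calc x 0 * (x 1 * (x 2 * (x 3 * y 4))) = x 0 * 1 * x 1 * 1 * x 2 * (x 3 * y 4) := by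
          noncomm_ring
      _ = 0 := by rw [h, zero_mul]
  have t3 : x 0 * (x 1 * (x 2 * (y 3 * x 4))) = 0 := by
    have h := hx 0 1 2 (by norm_num) (by norm_num) (by norm_num) 1 1
    calc x 0 * (x 1 * (x 2 * (y 3 * x 4))) = x 0 * 1 * x 1 * 1 * x 2 * (y 3 * x 4) := by
          noncomm_ring
      _ = 0 := by rw [h, zero_mul]
  have t4 : x 0 * (x 1 * (x 2 * (y 3 * y 4))) = 0 := by
    have h := hx 0 1 2 (by norm_num) (by norm_num) (by norm_num) 1 1
    calc x 0 * (x 1 * (x 2 * (y 3 * y 4))) = x 0 * 1 * x 1 * 1 * x 2 * (y 3 * y 4) := by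
          noncomm_ring
      _ = 0 := by rw [h, zero_mul]
  have t5 : x 0 * (y 1 * (x 2 * (x 3 * x 4))) = 0 := by
    have h := hx 0 2 3 (by norm_num) (by norm_num) (by norm_num) (y 1) 1
    calc x 0 * (y 1 * (x 2 * (x 3 * x 4))) = x 0 * y 1 * x 2 * 1 * x 3 * x 4 := by
          noncomm_ring
      _ = 0 := by rw [h, zero_mul]
  have t6 : x 0 * (y 1 * (x 2 * (x 3 * y 4))) = 0 := by
    have h := hx 0 2 3 (by norm_num) (by norm_num) (by norm_num) (y 1) 1
    calc x 0 * (y 1 * (x 2 * (x 3 * y 4))) = x 0 * y 1 * x 2 * 1 * x 3 * y 4 := by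
          noncomm_ring
      _ = 0 := by rw [h, zero_mul]
  have t7 : x 0 * (y 1 * (x 2 * (y 3 * x 4))) = 0 := by
    have h := hx 0 2 4 (by norm_num) (by norm_num) (by norm_num) (y 1) (y 3)
    calc x 0 * (y 1 * (x 2 * (y 3 * x 4))) = x 0 * y 1 * x 2 * y 3 * x 4 := by noncomm_ring
      _ = 0 := h
  have t8 : x 0 * (y 1 * (x 2 * (y 3 * y 4))) = 0 := by
    have h := hy 1 3 4 (by norm_num) (by norm_num) (by norm_num) (x 2) 1
    calc x 0 * (y 1 * (x 2 * (y 3 * y 4))) = x 0 * (y 1 * x 2 * y 3 * 1 * y 4) := by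
          noncomm_ring
      _ = 0 := by rw [h, mul_zero]
  have t9 : y 0 * (x 1 * (x 2 * (x 3 * x 4))) = 0 := by
    have h := hx 1 2 3 (by norm_num) (by norm_num) (by norm_num) 1 1
    calc y 0 * (x 1 * (x 2 * (x 3 * x 4))) = y 0 * (x 1 * 1 * x 2 * 1 * x 3 * x 4) := by
          noncomm_ring
      _ = 0 := by rw [show x 1 * 1 * x 2 * 1 * x 3 * x 4 = x 1 * 1 * x 2 * 1 * x 3 * x 4 from rfl, h, zero_mul, mul_zero]
  have t10 : y 0 * (x 1 * (x 2 * (x 3 * y 4))) = 0 := by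
    have h := hx 1 2 3 (by norm_num) (by norm_num) (by norm_num) 1 1
    calc y 0 * (x 1 * (x 2 * (x 3 * y 4))) = y 0 * (x 1 * 1 * x 2 * 1 * x 3 * y 4) := by
          noncomm_ring
      _ = 0 := by rw [h, zero_mul, mul_zero]
  have t11 : y 0 * (x 1 * (x 2 * (y 3 * x 4))) = 0 := by
    have h := hx 1 2 4 (by norm_num) (by norm_num) (by norm_num) 1 (y 3)
    calc y 0 * (x 1 * (x 2 * (y 3 * x 4))) = y 0 * (x 1 * 1 * x 2 * y 3 * x 4) := by
          noncomm_ring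
      _ = 0 := by rw [h, mul_zero]
  have t12 : y 0 * (x 1 * (x 2 * (y 3 * y 4))) = 0 := by
    have h := hy 0 3 4 (by norm_num) (by norm_num) (by norm_num) (x 1 * x 2) 1
    calc y 0 * (x 1 * (x 2 * (y 3 * y 4))) = y 0 * (x 1 * x 2) * y 3 * 1 * y 4 := by
          noncomm_ring
      _ = 0 := h
  have t13 : y 0 * (y 1 * (x 2 * (x 3 * x 4))) = 0 := by
    have h := hx 2 3 4 (by norm_num) (by norm_num) (by norm_num) 1 1
    calc y 0 * (y 1 * (x 2 * (x 3 * x 4))) = y 0 * (y 1 * (x 2 * 1 * x 3 * 1 * x 4)) := by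
          noncomm_ring
      _ = 0 := by rw [h, mul_zero, mul_zero]
  have t14 : y 0 * (y 1 * (x 2 * (x 3 * y 4))) = 0 := by
    have h := hy 0 1 4 (by norm_num) (by norm_num) (by norm_num) 1 (x 2 * x 3)
    calc y 0 * (y 1 * (x 2 * (x 3 * y 4))) = y 0 * 1 * y 1 * (x 2 * x 3) * y 4 := by
          noncomm_ring
      _ = 0 := h
  have t15 : y 0 * (y 1 * (x 2 * (y 3 * x 4))) = 0 := by
    have h := hy 0 1 3 (by norm_num) (by norm_num) (by norm_num) 1 (x 2)
    calc y 0 * (y 1 * (x 2 * (y 3 * x 4))) = y 0 * 1 * y 1 * x 2 * y 3 * x 4 := by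
          noncomm_ring
      _ = 0 := by rw [h, zero_mul]
  have t16 : y 0 * (y 1 * (x 2 * (y 3 * y 4))) = 0 := by
    have h := hy 0 1 3 (by norm_num) (by norm_num) (by norm_num) 1 (x 2)
    calc y 0 * (y 1 * (x 2 * (y 3 * y 4))) = y 0 * 1 * y 1 * x 2 * y 3 * y 4 := by
          noncomm_ring
      _ = 0 := by rw [h, zero_mul]
  calc x 2 = (x 0 + y 0) * ((x 1 + y 1) * (x 2 * ((x 3 + y 3) * (x 4 + y 4)))) := by
        rw [hxy 0, hxy 1, hxy 3, hxy 4]; simp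
    _ = x 0 * (x 1 * (x 2 * (x 3 * x 4))) + x 0 * (x 1 * (x 2 * (x 3 * y 4)))
        + x 0 * (x 1 * (x 2 * (y 3 * x 4))) + x 0 * (x 1 * (x 2 * (y 3 * y 4)))
        + x 0 * (y 1 * (x 2 * (x 3 * x 4))) + x 0 * (y 1 * (x 2 * (x 3 * y 4)))
        + x 0 * (y 1 * (x 2 * (y 3 * x 4))) + x 0 * (y 1 * (x 2 * (y 3 * y 4)))
        + y 0 * (x 1 * (x 2 * (x 3 * x 4))) + y 0 * (x 1 * (x 2 * (x 3 * y 4)))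
        + y 0 * (x 1 * (x 2 * (y 3 * x 4))) + y 0 * (x 1 * (x 2 * (y 3 * y 4)))
        + y 0 * (y 1 * (x 2 * (x 3 * x 4))) + y 0 * (y 1 * (x 2 * (x 3 * y 4)))
        + y 0 * (y 1 * (x 2 * (y 3 * x 4))) + y 0 * (y 1 * (x 2 * (y 3 * y 4))) := by
          noncomm_ring
    _ = 0 := by
          rw [t1, t2, t3, t4, t5, t6, t7, t8, t9, t10, t11, t12, t13, t14, t15, t16]
          simp

lemma one_eq_zero_of_triples {R : Type*} [Ring R] (x y : ℕ → R)
    (hxy : ∀ m, x m + y m = 1)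
    (hx : ∀ i j k : ℕ, i < j → j < k → k ≤ 4 → ∀ r r' : R, x i * r * x j * r' * x k = 0)
    (hy : ∀ i j k : ℕ, i < j → j < k → k ≤ 4 → ∀ r r' : R, y i * r * y j * r' * y k = 0) :
    (1 : R) = 0 := by
  have h1 : x 2 = 0 := mid_zero x y hxy hx hy
  have h2 : y 2 = 0 := mid_zero y x (fun m => by rw [add_comm]; exact hxy m) hy hx
  rw [← hxy 2, h1, h2, add_zero]

end AuxHelpers
/-- For `n ≥ 5`, if `S` is a subring of `T_n(R)` strictly containing `D_n(R)` and `S`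
contains a non-trivial idempotent, then `S` is not i-reversible. -/
theorem not_isIReversible_of_nontrivial_idempotent (R : Type*) [Ring R] (n : ℕ) (hn : 5 ≤ n)
    (S : Subring (Matrix (Fin n) (Fin n) R)) (hST : S ≤ triangularRing n R)
    (hDS : constDiagRing n R < S)
    (e : Matrix (Fin n) (Fin n) R) (heS : e ∈ S) (he : IsIdempotentElem e)
    (he0 : e ≠ 0) (he1 : e ≠ 1) :
    ¬ IsIReversible S := by
  intro hrev
  have hD : constDiagRing n R ≤ S := le_of_lt hDS
  have heu : e.IsUpperTri := hST heS
  have hgu : (1 - e : Matrix (Fin n) (Fin n) R).IsUpperTri := by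
    intro p q h
    simp [Matrix.sub_apply, Matrix.one_apply_ne h.ne', heu h]
  have h1e0 : (1 - e : Matrix (Fin n) (Fin n) R) ≠ 0 := fun h => he1 (by
    rw [sub_eq_zero] at h; exact h.symm)
  have h1eS : (1 - e) ∈ S := sub_mem (one_mem S) heS
  have hytrip : ∀ {i j k : Fin n}, i < j → j < k → ∀ r r' : R,
      (1 - e) i i * r * (1 - e) j j * r' * (1 - e) k k = 0 :=
    fun hij hjk r r' => triple_zero S hrev hD e heS he he0 heu hij hjk r r'
  have hxtrip : ∀ {i j k : Fin n}, i < j → j < k → ∀ r r' : R,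
      e i i * r * e j j * r' * e k k = 0 := by
    intro i j k hij hjk r r'
    have := triple_zero S hrev hD (1 - e) h1eS he.one_sub h1e0 hgu hij hjk r r'
    simpa [sub_sub_cancel] using this
  have h10 : (1 : R) = 0 := by
    have hF4 : ∀ m : ℕ, min m 4 < n := fun m => by omega
    set F : ℕ → Fin n := fun m => ⟨min m 4, hF4 m⟩ with hF
    have hFlt : ∀ {p q : ℕ}, p < q → q ≤ 4 → F p < F q := by
      intro p q h h4
      simp only [hF, Fin.mk_lt_mk]
      omega
    refine one_eq_zero_of_triples (fun m => e (F m) (F m)) (fun m => (1 - e) (F m) (F m))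
      (fun m => ?_)
      (fun i j k hij hjk h4 r r' => hxtrip (hFlt hij (by omega)) (hFlt hjk h4) r r')
      (fun i j k hij hjk h4 r r' => hytrip (hFlt hij (by omega)) (hFlt hjk h4) r r')
    simp [Matrix.sub_apply, Matrix.one_apply_eq]
  refine he0 (Matrix.ext fun p q => ?_)
  rw [Matrix.zero_apply]
  calc e p q = e p q * 1 := (mul_one _).symm
    _ = 0 := by rw [h10, mul_zero]
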